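/- For all closed session types T and U: T ≼ U (i.e., T ≤_⊕ U) if and only if the language of the product automaton 𝒜(T) × 𝒜(U) of their term automata is empty (i.e., no accepting state of the product automaton is reachable from its initial state). -/

import Mathlib

namespace SessionCF

/-- Polarity of an action: `send` is `!`, `recv` is `?`.  Also used for the
choice constructors: `send` is the internal choice `⊕`, `recv` the external
choice `&`. -/
inductive Pol : Type
  | send
  | recv
  deriving DecidableEq, Repr

/-- The dual polarity / constructor. -/
def Pol.dual : Pol → Pol
  | .send => .recv
  | .recv => .send

/-- Actions `!a` and `?a` over the alphabet `A`. -/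
abbrev Act (A : Type) := Pol × A

/-- Session types (de Bruijn representation of recursion variables).
An internal choice `⊕_{i∈I} !a_i.T_i` is `choice .send I br`; an external
choice `&_{i∈I} ?a_i.T_i` is `choice .recv I br`, where `br a` is the
continuation after message `a` (only relevant for `a ∈ I`). -/
inductive SType (A : Type) : Type
  | end_ : SType A
  | choice : Pol → Finset A → (A → SType A) → SType A
  | mu : SType A → SType A
  | var : ℕ → SType A

namespace SType

variable {A : Type}

/-- Lifting of a renaming under a binder. -/
def liftR (f : ℕ → ℕ) : ℕ → ℕ
  | 0 => 0
  | n + 1 => f n + 1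

/-- Renaming of free type variables. -/
def rename : SType A → (ℕ → ℕ) → SType A
  | .end_, _ => .end_
  | .choice p d br, f => .choice p d (fun a => (br a).rename f)
  | .mu T, f => .mu (T.rename (liftR f))
  | .var n, f => .var (f n)

/-- Lifting of a (parallel, capture-avoiding) substitution under a binder. -/
def liftS (σ : ℕ → SType A) : ℕ → SType A
  | 0 => .var 0
  | n + 1 => (σ n).rename Nat.succ

/-- Parallel capture-avoiding substitution. -/
def subst : SType A → (ℕ → SType A) → SType A
  | .end_, _ => .end_
  | .choice p d br, σ => .choice p d (fun a => (br a).subst σ)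
  | .mu T, σ => .mu (T.subst (liftS σ))
  | .var n, σ => σ n

/-- Capture-avoiding substitution `T[U/x]` of `U` for the free variable `x`. -/
def substVar (T : SType A) (x : ℕ) (U : SType A) : SType A :=
  T.subst (fun n => if n = x then U else .var n)

/-- `cons` of a type onto a substitution. -/
def consS (U : SType A) (σ : ℕ → SType A) : ℕ → SType A
  | 0 => U
  | n + 1 => σ n

/-- The unfolding `T[rec x.T / x]` of the body of `rec x.T`. -/
def unfold (T : SType A) : SType A :=
  T.subst (consS (.mu T) .var)

/-- All free variables are `< k`. -/
def closedUnder : SType A → ℕ → Prop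
  | .end_, _ => True
  | .choice _ d br, k => ∀ a ∈ d, (br a).closedUnder k
  | .mu T, k => T.closedUnder (k + 1)
  | .var n, k => n < k

/-- A closed session type (no free variables). -/
def closed (T : SType A) : Prop := T.closedUnder 0

/-- Variable `x` only occurs guarded (under a choice prefix). -/
def guardedVar : SType A → ℕ → Prop
  | .end_, _ => True
  | .choice _ _ _, _ => True
  | .mu T, x => T.guardedVar (x + 1)
  | .var m, x => m ≠ x

/-- Well-formed session types: contractive (every recursion variable is
guarded) and every choice has a nonempty, finite index set. -/
def wf : SType A → Prop
  | .end_ => True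
  | .choice _ d br => d.Nonempty ∧ ∀ a ∈ d, (br a).wf
  | .mu T => T.wf ∧ T.guardedVar 0
  | .var _ => True

/-- The dual session type: swaps `⊕` with `&` and `!` with `?`. -/
def dual : SType A → SType A
  | .end_ => .end_
  | .choice p d br => .choice p.dual d (fun a => (br a).dual)
  | .mu T => .mu T.dual
  | .var n => .var n

end SType

/-- The labelled transition system on session types. -/
inductive Step {A : Type} : SType A → Act A → SType A → Prop
  | choice {p : Pol} {d : Finset A} {br : A → SType A} {a : A} (h : a ∈ d) :
      Step (.choice p d br) (p, a) (br a)
  | unf {T : SType A} {α : Act A} {T' : SType A} :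
      Step T.unfold α T' → Step (.mu T) α T'

/-- Modal μ-calculus formulae (greatest-fixpoint fragment), de Bruijn. -/
inductive Formula (A : Type) : Type
  | tt : Formula A
  | ff : Formula A
  | and : Formula A → Formula A → Formula A
  | or : Formula A → Formula A → Formula A
  | box : Act A → Formula A → Formula A
  | dia : Act A → Formula A → Formula A
  | nu : Formula A → Formula A
  | var : ℕ → Formula A

namespace Formula

variable {A : Type}

/-- Renaming of free formula variables. -/
def rename : Formula A → (ℕ → ℕ) → Formula A
  | .tt, _ => .tt
  | .ff, _ => .ff
  | .and φ ψ, f => .and (φ.rename f) (ψ.rename f)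
  | .or φ ψ, f => .or (φ.rename f) (ψ.rename f)
  | .box α φ, f => .box α (φ.rename f)
  | .dia α φ, f => .dia α (φ.rename f)
  | .nu φ, f => .nu (φ.rename (SType.liftR f))
  | .var n, f => .var (f n)

/-- Lifting of a substitution under a `ν` binder. -/
def liftF (τ : ℕ → Formula A) : ℕ → Formula A
  | 0 => .var 0
  | n + 1 => (τ n).rename Nat.succ

/-- Parallel capture-avoiding substitution on formulae. -/
def subst : Formula A → (ℕ → Formula A) → Formula A
  | .tt, _ => .tt
  | .ff, _ => .ff
  | .and φ ψ, τ => .and (φ.subst τ) (ψ.subst τ)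
  | .or φ ψ, τ => .or (φ.subst τ) (ψ.subst τ)
  | .box α φ, τ => .box α (φ.subst τ)
  | .dia α φ, τ => .dia α (φ.subst τ)
  | .nu φ, τ => .nu (φ.subst (liftF τ))
  | .var n, τ => τ n

/-- Capture-avoiding substitution `φ[ψ/x]` for the free variable `x`. -/
def substVar (φ : Formula A) (x : ℕ) (ψ : Formula A) : Formula A :=
  φ.subst (fun n => if n = x then ψ else .var n)

/-- `cons` of a formula onto a substitution. -/
def consF (ψ : Formula A) (τ : ℕ → Formula A) : ℕ → Formula A
  | 0 => ψ
  | n + 1 => τ n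

/-- Instantiation `φ[ψ/x]` of the variable bound by the enclosing binder
(de Bruijn index `0`). -/
def inst (φ ψ : Formula A) : Formula A :=
  φ.subst (consF ψ .var)

/-- The `n`-th approximation `(νx.φ)ⁿ` of the fixpoint `νx.φ`, where `φ` is
the body:  `(νx.φ)⁰ = true` and `(νx.φ)ⁿ⁺¹ = φ[(νx.φ)ⁿ/x]`. -/
def nuApprox (φ : Formula A) : ℕ → Formula A
  | 0 => .tt
  | n + 1 => φ.inst (φ.nuApprox n)

/-- All free formula variables are `< k`. -/
def closedUnder : Formula A → ℕ → Prop
  | .tt, _ => True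
  | .ff, _ => True
  | .and φ ψ, k => φ.closedUnder k ∧ ψ.closedUnder k
  | .or φ ψ, k => φ.closedUnder k ∧ ψ.closedUnder k
  | .box _ φ, k => φ.closedUnder k
  | .dia _ φ, k => φ.closedUnder k
  | .nu φ, k => φ.closedUnder (k + 1)
  | .var n, k => n < k

/-- A closed formula. -/
def closed (φ : Formula A) : Prop := φ.closedUnder 0

/-- Variable `x` only occurs guarded (under a modality). -/
def guardedVar : Formula A → ℕ → Prop
  | .tt, _ => True
  | .ff, _ => True
  | .and φ ψ, x => φ.guardedVar x ∧ ψ.guardedVar x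
  | .or φ ψ, x => φ.guardedVar x ∧ ψ.guardedVar x
  | .box _ _, _ => True
  | .dia _ _, _ => True
  | .nu φ, x => φ.guardedVar (x + 1)
  | .var m, x => m ≠ x

/-- Contractive (well-formed) formulae. -/
def wf : Formula A → Prop
  | .tt => True
  | .ff => True
  | .and φ ψ => φ.wf ∧ ψ.wf
  | .or φ ψ => φ.wf ∧ ψ.wf
  | .box _ φ => φ.wf
  | .dia _ φ => φ.wf
  | .nu φ => φ.wf ∧ φ.guardedVar 0
  | .var _ => True

/-- The dual formula: swaps `!` and `?` in all modalities. -/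
def dual : Formula A → Formula A
  | .tt => .tt
  | .ff => .ff
  | .and φ ψ => .and φ.dual ψ.dual
  | .or φ ψ => .or φ.dual ψ.dual
  | .box (p, a) φ => .box (p.dual, a) φ.dual
  | .dia (p, a) φ => .dia (p.dual, a) φ.dual
  | .nu φ => .nu φ.dual
  | .var n => .var n

end Formula

/-- The satisfaction relation `T ⊨ φ` between session types and formulae,
defined inductively; `T ⊨ νx.φ` iff `T ⊨ (νx.φ)ⁿ` for all `n`. -/
inductive Sat {A : Type} : SType A → Formula A → Prop
  | tt {T : SType A} : Sat T .tt
  | and {T : SType A} {φ ψ : Formula A} : Sat T φ → Sat T ψ → Sat T (.and φ ψ)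
  | orl {T : SType A} {φ ψ : Formula A} : Sat T φ → Sat T (.or φ ψ)
  | orr {T : SType A} {φ ψ : Formula A} : Sat T ψ → Sat T (.or φ ψ)
  | box {T : SType A} {α : Act A} {φ : Formula A} :
      (∀ T', Step T α T' → Sat T' φ) → Sat T (.box α φ)
  | dia {T T' : SType A} {α : Act A} {φ : Formula A} :
      Step T α T' → Sat T' φ → Sat T (.dia α φ)
  | nu {T : SType A} {φ : Formula A} :
      (∀ n, Sat T (φ.nuApprox n)) → Sat T (.nu φ)

/-- One step of the subtyping rules (for parameter `s ∈ {⊕, &}`), including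
the equi-recursive identifications of `rec x.T` with its unfolding. -/
def SubStep {A : Type} (s : Pol) (R : SType A → SType A → Prop)
    (T U : SType A) : Prop :=
  (T = .end_ ∧ U = .end_)
  ∨ (∃ (dT : Finset A) (brT : A → SType A) (dU : Finset A) (brU : A → SType A),
      T = .choice s dT brT ∧ U = .choice s dU brU ∧ dT ⊆ dU ∧
        ∀ a ∈ dT, R (brT a) (brU a))
  ∨ (∃ (dT : Finset A) (brT : A → SType A) (dU : Finset A) (brU : A → SType A),
      T = .choice s.dual dT brT ∧ U = .choice s.dual dU brU ∧ dU ⊆ dT ∧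
        ∀ a ∈ dU, R (brT a) (brU a))
  ∨ (∃ T₀, T = .mu T₀ ∧ R T₀.unfold U)
  ∨ (∃ U₀, U = .mu U₀ ∧ R T U₀.unfold)

/-- The subtyping relation `≤_s`: the largest relation closed under the
(coinductively interpreted, equi-recursive) subtyping rules. -/
def Subtype {A : Type} (s : Pol) (T U : SType A) : Prop :=
  ∃ R : SType A → SType A → Prop,
    (∀ T U, R T U → SubStep s R T U) ∧ R T U

section CharFormula

variable {A : Type} [Fintype A] [LinearOrder A]

/-- Big conjunction of a list of formulae. -/
def bigAnd : List (Formula A) → Formula A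
  | [] => .tt
  | φ :: rest => .and φ (bigAnd rest)

/-- Big disjunction of a list of formulae. -/
def bigOr : List (Formula A) → Formula A
  | [] => .ff
  | φ :: rest => .or φ (bigOr rest)

/-- The (canonically ordered) list of all actions `𝒜 = {!a, ?a : a ∈ 𝔸}`. -/
def allActs (A : Type) [Fintype A] [LinearOrder A] : List (Act A) :=
  ((Finset.univ : Finset A).sort (· ≤ ·)).map (fun a => (Pol.send, a)) ++
    ((Finset.univ : Finset A).sort (· ≤ ·)).map (fun a => (Pol.recv, a))

/-- The characteristic formula `F(T, s)` of a session type `T` on the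
constructor `s ∈ {⊕, &}`. -/
def charF : SType A → Pol → Formula A
  | .end_, _ => bigAnd ((allActs A).map (fun α => .box α .ff))
  | .var n, _ => .var n
  | .mu T, s => .nu (charF T s)
  | .choice p d br, s =>
      if p = s then
        bigAnd ((d.sort (· ≤ ·)).map (fun a => .dia (p, a) (charF (br a) s)))
      else
        .and
          (bigAnd ((d.sort (· ≤ ·)).map (fun a => .box (p, a) (charF (br a) s))))
          (.and
            (bigOr ((d.sort (· ≤ ·)).map (fun a => Formula.dia (p, a) .tt)))
            (bigAnd (((allActs A).filter
                (fun α => ¬ (α.1 = p ∧ α.2 ∈ d))).map (fun α => .box α .ff))))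

end CharFormula

/-- Synchronous semantics of a system of two session types. -/
inductive SysStep {A : Type} : SType A × SType A → SType A × SType A → Prop
  | comm {T T' U U' : SType A} {p : Pol} {a : A} :
      Step T (p, a) T' → Step U (p.dual, a) U' → SysStep (T, U) (T', U')

/-- `T` is a choice with constructor `p`. -/
def isChoice {A : Type} (p : Pol) (T : SType A) : Prop :=
  ∃ (d : Finset A) (br : A → SType A), T = SType.choice p d br

/-- Error systems. -/
def Error {A : Type} (T U : SType A) : Prop :=
  (∃ p, isChoice p T ∧ isChoice p U)
  ∨ (∃ (dT : Finset A) (brT : A → SType A) (dU : Finset A) (brU : A → SType A),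
      T = .choice .send dT brT ∧ U = .choice .recv dU brU ∧ ∃ a ∈ dT, a ∉ dU)
  ∨ (∃ (dT : Finset A) (brT : A → SType A) (dU : Finset A) (brU : A → SType A),
      U = .choice .send dU brU ∧ T = .choice .recv dT brT ∧ ∃ a ∈ dU, a ∉ dT)
  ∨ (T = .end_ ∧ ∃ p, isChoice p U)
  ∨ (U = .end_ ∧ ∃ p, isChoice p T)

/-- A system is safe if no reachable system is an error. -/
def Safe {A : Type} (T U : SType A) : Prop :=
  ∀ S' : SType A × SType A,
    Relation.ReflTransGen SysStep (T, U) S' → ¬ Error S'.1 S'.2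

/-- A substitution is closed when all its components are closed types. -/
def closedSubst {A : Type} (σ : ℕ → SType A) : Prop :=
  ∀ n, (σ n).closed

/-- Extended subtyping: all closed instantiations of the free variables are
related by `≤_s`. -/
def ExtSub {A : Type} (s : Pol) (T U : SType A) : Prop :=
  ∀ σ : ℕ → SType A, closedSubst σ → Subtype s (T.subst σ) (U.subst σ)

/-- The `k`-limited subtyping derivations on closed types (equi-recursive:
recursion may be unfolded freely at the same level; premises are at level
`k - 1`; everything holds at level `0`). -/
inductive SubK {A : Type} (s : Pol) : ℕ → SType A → SType A → Prop
  | zero {T U : SType A} : SubK s 0 T U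
  | end_ {k : ℕ} : SubK s (k + 1) .end_ .end_
  | ch {k : ℕ} {dT : Finset A} {brT : A → SType A} {dU : Finset A}
      {brU : A → SType A} :
      dT ⊆ dU → (∀ a ∈ dT, SubK s k (brT a) (brU a)) →
      SubK s (k + 1) (.choice s dT brT) (.choice s dU brU)
  | coch {k : ℕ} {dT : Finset A} {brT : A → SType A} {dU : Finset A}
      {brU : A → SType A} :
      dU ⊆ dT → (∀ a ∈ dU, SubK s k (brT a) (brU a)) →
      SubK s (k + 1) (.choice s.dual dT brT) (.choice s.dual dU brU)
  | recL {k : ℕ} {T U : SType A} :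
      SubK s (k + 1) T.unfold U → SubK s (k + 1) (.mu T) U
  | recR {k : ℕ} {T U : SType A} :
      SubK s (k + 1) T U.unfold → SubK s (k + 1) T (.mu U)

/-- The extended `k`-limited subtyping `≤_{s,e,k}`. -/
def ExtSubK {A : Type} (s : Pol) (k : ℕ) (T U : SType A) : Prop :=
  ∀ σ : ℕ → SType A, closedSubst σ → SubK s k (T.subst σ) (U.subst σ)

/-- Extended satisfaction `T ⊨_e φ`: every closed instantiation of the type
by types `V_i` and of the formula by closed formulae `ψ_i` with `V_i ⊨ ψ_i`
(at the same variable) satisfies the instantiated formula. -/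
def SatE {A : Type} (T : SType A) (φ : Formula A) : Prop :=
  ∀ (σ : ℕ → SType A) (τ : ℕ → Formula A),
    closedSubst σ → (∀ n, (τ n).closed) → (∀ n, Sat (σ n) (τ n)) →
    Sat (T.subst σ) (φ.subst τ)

/-- The `k`-limited extended satisfaction relation `⊨_{e,k}`. -/
inductive SatK {A : Type} : ℕ → SType A → Formula A → Prop
  | zero {T : SType A} {φ : Formula A} : SatK 0 T φ
  | tt {k : ℕ} {T : SType A} : SatK (k + 1) T .tt
  | and {k : ℕ} {T : SType A} {φ ψ : Formula A} :
      SatK (k + 1) T φ → SatK (k + 1) T ψ → SatK (k + 1) T (.and φ ψ)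
  | orl {k : ℕ} {T : SType A} {φ ψ : Formula A} :
      SatK (k + 1) T φ → SatK (k + 1) T (.or φ ψ)
  | orr {k : ℕ} {T : SType A} {φ ψ : Formula A} :
      SatK (k + 1) T ψ → SatK (k + 1) T (.or φ ψ)
  | box {k : ℕ} {T : SType A} {α : Act A} {φ : Formula A} :
      (∀ σ : ℕ → SType A, closedSubst σ →
        ∀ T', Step (T.subst σ) α T' → SatK k T' φ) →
      SatK (k + 1) T (.box α φ)
  | dia {k : ℕ} {T : SType A} {α : Act A} {φ : Formula A}
      (W : ∀ σ : ℕ → SType A, closedSubst σ → SType A) :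
      (∀ (σ : ℕ → SType A) (h : closedSubst σ), Step (T.subst σ) α (W σ h)) →
      (∀ (σ : ℕ → SType A) (h : closedSubst σ), SatK k (W σ h) φ) →
      SatK (k + 1) T (.dia α φ)
  | nu {k : ℕ} {T : SType A} {φ : Formula A} :
      (∀ n, SatK (k + 1) T (φ.nuApprox n)) → SatK (k + 1) T (.nu φ)

/-- Type constructors `ℭ`: `end`, `⊕A` and `&A`. -/
inductive Ctor (A : Type) : Type
  | end_ : Ctor A
  | choice : Pol → Finset A → Ctor A

/-- The labelling of the term automaton `𝒜(T)`: the constructor of (the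
unfolding of) a session type. -/
inductive HasCtor {A : Type} : SType A → Ctor A → Prop
  | end_ : HasCtor .end_ .end_
  | choice {p : Pol} {d : Finset A} {br : A → SType A} :
      HasCtor (.choice p d br) (.choice p d)
  | unf {T : SType A} {c : Ctor A} : HasCtor T.unfold c → HasCtor (.mu T) c

/-- The order `⊑` on type constructors. -/
def CtorLe {A : Type} : Ctor A → Ctor A → Prop
  | .end_, .end_ => True
  | .choice .send d₁, .choice .send d₂ => d₁ ⊆ d₂
  | .choice .recv d₁, .choice .recv d₂ => d₂ ⊆ d₁
  | _, _ => False

/-- Transitions of the product automaton `𝒜(T) × 𝒜(U)`: a common action. -/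
def ProdStep {A : Type} (S S' : SType A × SType A) : Prop :=
  ∃ α : Act A, Step S.1 α S'.1 ∧ Step S.2 α S'.2

end SessionCF

namespace SessionCF

section Aux

variable {A : Type} {R : SType A → SType A → Prop}

lemma closedUnder_rename :
    ∀ (T : SType A) {k m : ℕ} {f : ℕ → ℕ}, T.closedUnder k →
      (∀ n, n < k → f n < m) → (T.rename f).closedUnder m := by
  intro T
  induction T with
  | end_ => intros; trivial
  | choice p d br ih =>
      intro k m f h hf a ha
      exact ih a (h a ha) hf
  | mu T ih =>
      intro k m f h hf
      refine ih h ?_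
      intro n hn
      cases n with
      | zero => simpa [SType.liftR] using Nat.succ_pos m
      | succ n =>
          have := hf n (by omega)
          simp [SType.liftR]; omega
  | var n =>
      intro k m f h hf
      exact hf n h

lemma closedUnder_subst :
    ∀ (T : SType A) {k m : ℕ} {σ : ℕ → SType A}, T.closedUnder k →
      (∀ n, n < k → (σ n).closedUnder m) → (T.subst σ).closedUnder m := by
  intro T
  induction T with
  | end_ => intros; trivial
  | choice p d br ih =>
      intro k m σ h hσ a ha
      exact ih a (h a ha) hσ
  | mu T ih =>
      intro k m σ h hσ
      refine ih h ?_
      intro n hn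
      cases n with
      | zero => simpa [SType.liftS, SType.closedUnder] using Nat.succ_pos m
      | succ n =>
          have hc := hσ n (by omega)
          exact closedUnder_rename _ hc (by intro i hi; omega)
  | var n =>
      intro k m σ h hσ
      exact hσ n h

lemma unfold_closed {T : SType A} (h : (SType.mu T).closed) : T.unfold.closed := by
  refine closedUnder_subst T h ?_
  intro n hn
  interval_cases n
  exact h

lemma step_pres_aux (hcl : ∀ T U, R T U → SubStep .send R T U) :
    ∀ {U α U'}, Step U α U' → ∀ {p : Pol} {d : Finset A} {br : A → SType A} {a : A},
      α = (p, a) → a ∈ d → R (.choice p d br) U → R (br a) U' := by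
  intro U α U' hU
  induction hU with
  | @choice p' d' br' a' ha' =>
      intro p d br a hα ha hR
      injection hα with h1 h2; subst h1; subst h2
      have h' := hcl _ _ hR
      unfold SubStep at h'
      rcases h' with ⟨h1, _⟩ | ⟨dT, brT, dU, brU, hT, hU, hsub, hbr⟩ |
        ⟨dT, brT, dU, brU, hT, hU, hsub, hbr⟩ | ⟨T₀, hT, _⟩ | ⟨U₀, hU, _⟩
      · cases h1
      · injection hT with hp hd hb
        injection hU with hp' hd' hb'
        subst hp; subst hd; subst hb; subst hd'; subst hb'
        exact hbr _ ha
      · injection hT with hp hd hb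
        injection hU with hp' hd' hb'
        subst hp; subst hd; subst hb; subst hd'; subst hb'
        exact hbr _ ha'
      · cases hT
      · cases hU
  | @unf U₀ α' U'' hU₀ ih =>
      intro p d br a hα ha hR
      have h' := hcl _ _ hR
      unfold SubStep at h'
      rcases h' with ⟨h1, _⟩ | ⟨dT, brT, dU, brU, hT, hU, hsub, hbr⟩ |
        ⟨dT, brT, dU, brU, hT, hU, hsub, hbr⟩ | ⟨T₀, hT, _⟩ | ⟨V, hV, hr⟩
      · cases h1
      · cases hU
      · cases hU
      · cases hT
      · injection hV with h1; subst h1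
        exact ih hα ha hr

lemma step_pres_mu (hcl : ∀ T U, R T U → SubStep .send R T U) :
    ∀ {U α U'}, Step U α U' → ∀ {T₀ : SType A} {T' : SType A},
      (∀ V V', Step V α V' → R T₀.unfold V → R T' V') → R (.mu T₀) U → R T' U' := by
  intro U α U' hU
  induction hU with
  | @choice p d br a ha =>
      intro T₀ T' hIH hR
      have h' := hcl _ _ hR
      unfold SubStep at h'
      rcases h' with ⟨h1, _⟩ | ⟨dT, brT, dU, brU, hT, hU, hsub, hbr⟩ |
        ⟨dT, brT, dU, brU, hT, hU, hsub, hbr⟩ | ⟨V, hV, hr⟩ | ⟨W, hW, _⟩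
      · cases h1
      · cases hT
      · cases hT
      · injection hV with h1; subst h1
        exact hIH _ _ (Step.choice ha) hr
      · cases hW
  | @unf U₀ α U'' hU₀ ih =>
      intro T₀ T' hIH hR
      have h' := hcl _ _ hR
      unfold SubStep at h'
      rcases h' with ⟨h1, _⟩ | ⟨dT, brT, dU, brU, hT, hU, hsub, hbr⟩ |
        ⟨dT, brT, dU, brU, hT, hU, hsub, hbr⟩ | ⟨V, hV, hr⟩ | ⟨W, hW, hr⟩
      · cases h1
      · cases hT
      · cases hT
      · injection hV with h1; subst h1
        exact hIH _ _ (Step.unf hU₀) hr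
      · injection hW with h1; subst h1
        exact ih hIH hr

lemma step_pres (hcl : ∀ T U, R T U → SubStep .send R T U) :
    ∀ {T α T'}, Step T α T' → ∀ {U U'}, Step U α U' → R T U → R T' U' := by
  intro T α T' hT
  induction hT with
  | @choice p d br a ha =>
      intro U U' hU hR
      exact step_pres_aux hcl hU rfl ha hR
  | @unf T₀ α T'' hT₀ ih =>
      intro U U' hU hR
      exact step_pres_mu hcl hU (fun V V' hs hr => ih hs hr) hR

lemma ctor_end (hcl : ∀ T U, R T U → SubStep .send R T U) :
    ∀ {U c₂}, HasCtor U c₂ → R .end_ U → CtorLe .end_ c₂ := by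
  intro U c₂ hU
  induction hU with
  | end_ => intro _; trivial
  | @choice p d br =>
      intro hR
      have h' := hcl _ _ hR
      unfold SubStep at h'
      rcases h' with ⟨_, h1⟩ | ⟨dT, brT, dU, brU, hT, hU, _, _⟩ |
        ⟨dT, brT, dU, brU, hT, hU, _, _⟩ | ⟨V, hV, _⟩ | ⟨W, hW, _⟩
      · cases h1
      · cases hT
      · cases hT
      · cases hV
      · cases hW
  | @unf U₀ c hU₀ ih =>
      intro hR
      have h' := hcl _ _ hR
      unfold SubStep at h'
      rcases h' with ⟨_, h1⟩ | ⟨dT, brT, dU, brU, hT, hU, _, _⟩ |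
        ⟨dT, brT, dU, brU, hT, hU, _, _⟩ | ⟨V, hV, _⟩ | ⟨W, hW, hr⟩
      · cases h1
      · cases hT
      · cases hT
      · cases hV
      · injection hW with h1; subst h1
        exact ih hr

lemma ctor_choice (hcl : ∀ T U, R T U → SubStep .send R T U) :
    ∀ {U c₂}, HasCtor U c₂ → ∀ {p : Pol} {d : Finset A} {br : A → SType A},
      R (.choice p d br) U → CtorLe (.choice p d) c₂ := by
  intro U c₂ hU
  induction hU with
  | end_ =>
      intro p d br hR
      have h' := hcl _ _ hR
      unfold SubStep at h'
      rcases h' with ⟨h1, _⟩ | ⟨dT, brT, dU, brU, hT, hU, _, _⟩ |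
        ⟨dT, brT, dU, brU, hT, hU, _, _⟩ | ⟨V, hV, _⟩ | ⟨W, hW, _⟩
      · cases h1
      · cases hU
      · cases hU
      · cases hV
      · cases hW
  | @choice p' d' br' =>
      intro p d br hR
      have h' := hcl _ _ hR
      unfold SubStep at h'
      rcases h' with ⟨h1, _⟩ | ⟨dT, brT, dU, brU, hT, hU, hsub, _⟩ |
        ⟨dT, brT, dU, brU, hT, hU, hsub, _⟩ | ⟨V, hV, _⟩ | ⟨W, hW, _⟩
      · cases h1
      · injection hT with hp hd _
        injection hU with hp' hd' _
        subst hp; subst hd; subst hp'; subst hd'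
        exact hsub
      · injection hT with hp hd _
        injection hU with hp' hd' _
        subst hp; subst hd; subst hp'; subst hd'
        exact hsub
      · cases hV
      · cases hW
  | @unf U₀ c hU₀ ih =>
      intro p d br hR
      have h' := hcl _ _ hR
      unfold SubStep at h'
      rcases h' with ⟨h1, _⟩ | ⟨dT, brT, dU, brU, hT, hU, _, _⟩ |
        ⟨dT, brT, dU, brU, hT, hU, _, _⟩ | ⟨V, hV, _⟩ | ⟨W, hW, hr⟩
      · cases h1
      · cases hU
      · cases hU
      · cases hV
      · injection hW with h1; subst h1
        exact ih hr

lemma ctor_mu (hcl : ∀ T U, R T U → SubStep .send R T U) :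
    ∀ {U c₂}, HasCtor U c₂ → ∀ {T₀ : SType A} {c₁ : Ctor A},
      (∀ V c, HasCtor V c → R T₀.unfold V → CtorLe c₁ c) → R (.mu T₀) U →
        CtorLe c₁ c₂ := by
  intro U c₂ hU
  induction hU with
  | end_ =>
      intro T₀ c₁ hIH hR
      have h' := hcl _ _ hR
      unfold SubStep at h'
      rcases h' with ⟨h1, _⟩ | ⟨dT, brT, dU, brU, hT, hU, _, _⟩ |
        ⟨dT, brT, dU, brU, hT, hU, _, _⟩ | ⟨V, hV, hr⟩ | ⟨W, hW, _⟩
      · cases h1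
      · cases hT
      · cases hT
      · injection hV with h1; subst h1
        exact hIH _ _ HasCtor.end_ hr
      · cases hW
  | @choice p d br =>
      intro T₀ c₁ hIH hR
      have h' := hcl _ _ hR
      unfold SubStep at h'
      rcases h' with ⟨h1, _⟩ | ⟨dT, brT, dU, brU, hT, hU, _, _⟩ |
        ⟨dT, brT, dU, brU, hT, hU, _, _⟩ | ⟨V, hV, hr⟩ | ⟨W, hW, _⟩
      · cases h1
      · cases hT
      · cases hT
      · injection hV with h1; subst h1
        exact hIH _ _ HasCtor.choice hr
      · cases hW
  | @unf U₀ c hU₀ ih =>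
      intro T₀ c₁ hIH hR
      have h' := hcl _ _ hR
      unfold SubStep at h'
      rcases h' with ⟨h1, _⟩ | ⟨dT, brT, dU, brU, hT, hU, _, _⟩ |
        ⟨dT, brT, dU, brU, hT, hU, _, _⟩ | ⟨V, hV, hr⟩ | ⟨W, hW, hr⟩
      · cases h1
      · cases hT
      · cases hT
      · injection hV with h1; subst h1
        exact hIH _ _ (HasCtor.unf hU₀) hr
      · injection hW with h1; subst h1
        exact ih hIH hr

lemma ctor_main (hcl : ∀ T U, R T U → SubStep .send R T U) :
    ∀ {T c₁}, HasCtor T c₁ → ∀ {U c₂}, HasCtor U c₂ → R T U → CtorLe c₁ c₂ := by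
  intro T c₁ hT
  induction hT with
  | end_ => intro U c₂ hU hR; exact ctor_end hcl hU hR
  | @choice p d br => intro U c₂ hU hR; exact ctor_choice hcl hU hR
  | @unf T₀ c hT₀ ih =>
      intro U c₂ hU hR
      exact ctor_mu hcl hU (fun V c' hV hr => ih hV hr) hR

end Aux

end SessionCF

/-- For all closed session types `T`, `U`: `T ≼ U` iff the
language of the product automaton `𝒜(T) × 𝒜(U)` is empty, i.e., no accepting
state (a pair of states whose labels are not related by `⊑`) is reachable
from the initial state `(T, U)`. -/
theorem sub_iff_product_language_empty {A : Type}
    (T U : SessionCF.SType A)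
    (hTwf : T.wf) (hTcl : T.closed) (hUwf : U.wf) (hUcl : U.closed) :
    SessionCF.Subtype .send T U ↔
      ∀ S' : SessionCF.SType A × SessionCF.SType A,
        Relation.ReflTransGen SessionCF.ProdStep (T, U) S' →
        ∀ c₁ c₂ : SessionCF.Ctor A,
          SessionCF.HasCtor S'.1 c₁ → SessionCF.HasCtor S'.2 c₂ →
          SessionCF.CtorLe c₁ c₂ := by
  open SessionCF in
  constructor
  · rintro ⟨R, hcl, hTU⟩ S' hreach
    have hR' : R S'.1 S'.2 := by
      induction hreach with
      | refl => exact hTU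
      | tail h hstep ih =>
          obtain ⟨α, s1, s2⟩ := hstep
          exact step_pres hcl s1 s2 ih
    intro c₁ c₂ h1 h2
    exact ctor_main hcl h1 h2 hR'
  · intro hsafe
    refine ⟨fun V W => V.closed ∧ W.closed ∧
      (∀ S', Relation.ReflTransGen ProdStep (V, W) S' →
        ∀ c₁ c₂, HasCtor S'.1 c₁ → HasCtor S'.2 c₂ → CtorLe c₁ c₂),
      ?_, hTcl, hUcl, hsafe⟩
    rintro V W ⟨hVc, hWc, hsf⟩
    unfold SubStep
    -- helper: lift the safety predicate along a left unfolding
    cases V with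
    | var n => exact absurd hVc (Nat.not_lt_zero n)
    | mu V₀ =>
        refine Or.inr (Or.inr (Or.inr (Or.inl ⟨V₀, rfl, unfold_closed hVc, hWc, ?_⟩)))
        intro S' h c₁ c₂ h1 h2
        rcases h.cases_head with heq | ⟨b, hb, h'⟩
        · obtain rfl : S' = (V₀.unfold, W) := heq.symm
          exact hsf (SType.mu V₀, W) Relation.ReflTransGen.refl c₁ c₂ (HasCtor.unf h1) h2
        · obtain ⟨α, s1, s2⟩ := hb
          exact hsf S' (Relation.ReflTransGen.head ⟨α, Step.unf s1, s2⟩ h') c₁ c₂ h1 h2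
    | end_ =>
        cases W with
        | var n => exact absurd hWc (Nat.not_lt_zero n)
        | mu W₀ =>
            refine Or.inr (Or.inr (Or.inr (Or.inr ⟨W₀, rfl, hVc, unfold_closed hWc, ?_⟩)))
            intro S' h c₁ c₂ h1 h2
            rcases h.cases_head with heq | ⟨b, hb, h'⟩
            · obtain rfl : S' = (SType.end_, W₀.unfold) := heq.symm
              exact hsf (SType.end_, SType.mu W₀) Relation.ReflTransGen.refl c₁ c₂ h1 (HasCtor.unf h2)
            · obtain ⟨α, s1, s2⟩ := hb
              exact hsf S' (Relation.ReflTransGen.head ⟨α, s1, Step.unf s2⟩ h') c₁ c₂ h1 h2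
        | end_ => exact Or.inl ⟨rfl, rfl⟩
        | choice p d br =>
            have := hsf (SType.end_, SType.choice p d br) Relation.ReflTransGen.refl
              Ctor.end_ (Ctor.choice p d) HasCtor.end_ HasCtor.choice
            cases p <;> exact (this : False).elim
    | choice p₁ d₁ b₁ =>
        cases W with
        | var n => exact absurd hWc (Nat.not_lt_zero n)
        | mu W₀ =>
            refine Or.inr (Or.inr (Or.inr (Or.inr ⟨W₀, rfl, hVc, unfold_closed hWc, ?_⟩)))
            intro S' h c₁ c₂ h1 h2
            rcases h.cases_head with heq | ⟨b, hb, h'⟩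
            · obtain rfl : S' = (SType.choice p₁ d₁ b₁, W₀.unfold) := heq.symm
              exact hsf (SType.choice p₁ d₁ b₁, SType.mu W₀) Relation.ReflTransGen.refl
                c₁ c₂ h1 (HasCtor.unf h2)
            · obtain ⟨α, s1, s2⟩ := hb
              exact hsf S' (Relation.ReflTransGen.head ⟨α, s1, Step.unf s2⟩ h') c₁ c₂ h1 h2
        | end_ =>
            have := hsf (SType.choice p₁ d₁ b₁, SType.end_) Relation.ReflTransGen.refl
              (Ctor.choice p₁ d₁) Ctor.end_ HasCtor.choice HasCtor.end_
            cases p₁ <;> exact (this : False).elim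
        | choice p₂ d₂ b₂ =>
            have hcc := hsf (SType.choice p₁ d₁ b₁, SType.choice p₂ d₂ b₂)
              Relation.ReflTransGen.refl (Ctor.choice p₁ d₁) (Ctor.choice p₂ d₂)
              HasCtor.choice HasCtor.choice
            cases p₁ with
            | send =>
                cases p₂ with
                | recv => exact (hcc : False).elim
                | send =>
                    have hsub : d₁ ⊆ d₂ := hcc
                    refine Or.inr (Or.inl ⟨d₁, b₁, d₂, b₂, rfl, rfl, hsub, ?_⟩)
                    intro a ha
                    refine ⟨hVc a ha, hWc a (hsub ha), ?_⟩
                    intro S' h c₁ c₂ h1 h2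
                    exact hsf S' (Relation.ReflTransGen.head
                      ⟨(Pol.send, a), Step.choice ha, Step.choice (hsub ha)⟩ h) c₁ c₂ h1 h2
            | recv =>
                cases p₂ with
                | send => exact (hcc : False).elim
                | recv =>
                    have hsub : d₂ ⊆ d₁ := hcc
                    refine Or.inr (Or.inr (Or.inl ⟨d₁, b₁, d₂, b₂, rfl, rfl, hsub, ?_⟩))
                    intro a ha
                    refine ⟨hVc a (hsub ha), hWc a ha, ?_⟩
                    intro S' h c₁ c₂ h1 h2
                    exact hsf S' (Relation.ReflTransGen.head
                      ⟨(Pol.recv, a), Step.choice (hsub ha), Step.choice ha⟩ h) c₁ c₂ h1 h2
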